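/- Let β > 0, d = b − b' > 0, μ ∈ ℂ, and W : [b', b] → ℂ solve W'' − β² W = −μ ζ on (b', b) with W'(b) + β W(b) = 0. Then |W(b)| ≤ |μ|/(2β²) · ‖ζ‖_{L^∞([b',b])} + e^{−dβ} |W(b')|. -/

import Mathlib

noncomputable def cE (r : ℝ) : ℂ := Complex.exp r

lemma norm_cE (r : ℝ) : ‖cE r‖ = Real.exp r := by
  rw [cE, Complex.norm_exp]
  simp

lemma cE_deriv (c x : ℝ) : HasDerivAt (fun t : ℝ => cE (c * t)) ((c : ℂ) * cE (c * x)) x := by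
  have h : HasDerivAt (fun z : ℂ => Complex.exp ((c : ℂ) * z)) (Complex.exp ((c : ℂ) * x) * c) (x : ℂ) := by
    simpa using ((hasDerivAt_id (x : ℂ)).const_mul (c : ℂ)).cexp
  have h2 := h.comp_ofReal
  simp only [cE, Complex.ofReal_mul]
  simpa [mul_comm] using h2

lemma rexp_deriv (c : ℝ) (x : ℝ) :
    HasDerivAt (fun t : ℝ => Real.exp (c * t)) (c * Real.exp (c * x)) x := by
  simpa [mul_comm] using ((hasDerivAt_id x).const_mul c).exp

theorem stmt9 (b' b : ℝ) (hb : b' < b) (β M : ℝ) (hβ : 0 < β) (μ : ℂ)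
    (ζ : ℝ → ℂ) (hζ : ContinuousOn ζ (Set.Icc b' b))
    (W W' : ℝ → ℂ)
    (hW1 : ∀ x ∈ Set.Icc b' b, HasDerivAt W (W' x) x)
    (hW2 : ∀ x ∈ Set.Icc b' b, HasDerivAt W' ((β : ℂ) ^ 2 * W x - μ * ζ x) x)
    (hWb : W' b + (β : ℂ) * W b = 0)
    (hM : ∀ x ∈ Set.Icc b' b, ‖ζ x‖ ≤ M) :
    ‖W b‖ ≤ ‖μ‖ / (2 * β ^ 2) * M + Real.exp (-(b - b') * β) * ‖W b'‖ := by
  have hβ0 : (β : ℝ) ≠ 0 := ne_of_gt hβ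
  have hbmem : b ∈ Set.Icc b' b := ⟨le_of_lt hb, le_refl b⟩
  have hb'mem : b' ∈ Set.Icc b' b := ⟨le_refl b', le_of_lt hb⟩
  have hM0 : 0 ≤ M := le_trans (norm_nonneg _) (hM b' hb'mem)
  have hWc : ContinuousOn W (Set.Icc b' b) := fun x hx => (hW1 x hx).continuousAt.continuousWithinAt
  have hW'c : ContinuousOn W' (Set.Icc b' b) := fun x hx => (hW2 x hx).continuousAt.continuousWithinAt
  have hgc : ContinuousOn (fun s => W' s + (β : ℂ) * W s) (Set.Icc b' b) :=
    hW'c.add (continuousOn_const.mul hWc)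
  have hcEc : ∀ c : ℝ, Continuous (fun s : ℝ => cE (c * s)) :=
    fun c => Complex.continuous_exp.comp (Complex.continuous_ofReal.comp (continuous_const.mul continuous_id))
  -- Step 1: derivative of h t = cE(-βt) * (W' t + β W t)
  have hh : ∀ x ∈ Set.Icc b' b,
      HasDerivAt (fun t : ℝ => cE (-β * t) * (W' t + (β : ℂ) * W t))
        (cE (-β * x) * (-(μ * ζ x))) x := by
    intro x hx
    have h1 := (cE_deriv (-β) x).mul ((hW2 x hx).add ((hW1 x hx).const_mul (β : ℂ)))
    refine h1.congr_deriv ?_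
    simp only [Pi.add_apply]
    push_cast
    ring
  -- Step 2: bound
  have key2 : ∀ x ∈ Set.Icc b' b,
      ‖cE (β * x) * (W' x + (β : ℂ) * W x)‖ ≤
        ‖μ‖ * M / β * (Real.exp (β * x) - Real.exp (-(β * b)) * Real.exp (2 * β * x)) := by
    intro x hx
    have hxb : x ≤ b := hx.2
    have hsub : Set.uIcc x b ⊆ Set.Icc b' b := by
      rw [Set.uIcc_of_le hxb]
      exact Set.Icc_subset_Icc hx.1 le_rfl
    have hcont : ContinuousOn (fun s : ℝ => cE (-β * s) * (-(μ * ζ s))) (Set.uIcc x b) :=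
      (hcEc (-β)).continuousOn.mul ((continuousOn_const.mul (hζ.mono hsub)).neg)
    have hFTC := intervalIntegral.integral_eq_sub_of_hasDerivAt
      (fun t ht => hh t (hsub ht)) (hcont.intervalIntegrable)
    have hb0 : cE (-β * b) * (W' b + (β : ℂ) * W b) = 0 := by rw [hWb, mul_zero]
    have hval : cE (-β * x) * (W' x + (β : ℂ) * W x)
        = -(∫ s in x..b, cE (-β * s) * (-(μ * ζ s))) := by
      rw [hFTC, hb0]; ring
    have hbound : ‖∫ s in x..b, cE (-β * s) * (-(μ * ζ s))‖ ≤
        ∫ s in x..b, ‖μ‖ * M * Real.exp (-β * s) := by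
      refine le_trans (intervalIntegral.norm_integral_le_integral_norm hxb) ?_
      apply intervalIntegral.integral_mono_on hxb
      · exact hcont.norm.intervalIntegrable
      · exact (continuous_const.mul (Real.continuous_exp.comp (continuous_const.mul continuous_id))).continuousOn.intervalIntegrable
      · intro s hs
        have hsmem : s ∈ Set.Icc b' b := Set.Icc_subset_Icc hx.1 le_rfl hs
        rw [norm_mul, norm_neg, norm_mul, norm_cE]
        calc Real.exp (-β * s) * (‖μ‖ * ‖ζ s‖) ≤ Real.exp (-β * s) * (‖μ‖ * M) :=
              mul_le_mul_of_nonneg_left (mul_le_mul_of_nonneg_left (hM s hsmem) (norm_nonneg μ)) (le_of_lt (Real.exp_pos _))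
          _ = ‖μ‖ * M * Real.exp (-β * s) := by ring
    have hcomp : (∫ s in x..b, ‖μ‖ * M * Real.exp (-β * s)) =
        ‖μ‖ * M * ((Real.exp (-β * x) - Real.exp (-β * b)) / β) := by
      have hd : ∀ s ∈ Set.uIcc x b, HasDerivAt (fun t : ℝ => ‖μ‖ * M * (-(Real.exp (-β * t) / β)))
          (‖μ‖ * M * Real.exp (-β * s)) s := by
        intro s _
        have := (((rexp_deriv (-β) s).div_const β).neg).const_mul (‖μ‖ * M)
        refine this.congr_deriv ?_
        field_simp
      rw [intervalIntegral.integral_eq_sub_of_hasDerivAt hd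
        ((continuous_const.mul (Real.continuous_exp.comp (continuous_const.mul continuous_id))).continuousOn.intervalIntegrable)]
      ring
    have hx1 : ‖cE (-β * x) * (W' x + (β : ℂ) * W x)‖ ≤
        ‖μ‖ * M * ((Real.exp (-β * x) - Real.exp (-β * b)) / β) := by
      rw [hval, norm_neg, ← hcomp]; exact hbound
    rw [norm_mul, norm_cE] at hx1 ⊢
    have e2 : Real.exp (2 * β * x) * Real.exp (-β * x) = Real.exp (β * x) := by
      rw [← Real.exp_add]; ring_nf
    have e4 : Real.exp (2 * β * x) * Real.exp (-β * b) = Real.exp (-(β*b)) * Real.exp (2 * β * x) := by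
      rw [mul_comm]; ring_nf
    calc Real.exp (β * x) * ‖W' x + (β : ℂ) * W x‖
        = Real.exp (2 * β * x) * (Real.exp (-β * x) * ‖W' x + (β : ℂ) * W x‖) := by
          rw [← mul_assoc, e2]
      _ ≤ Real.exp (2 * β * x) * (‖μ‖ * M * ((Real.exp (-β * x) - Real.exp (-β * b)) / β)) :=
          mul_le_mul_of_nonneg_left hx1 (le_of_lt (Real.exp_pos _))
      _ = ‖μ‖ * M / β * (Real.exp (2*β*x) * Real.exp (-β * x) - Real.exp (2*β*x) * Real.exp (-β * b)) := by ring
      _ = ‖μ‖ * M / β * (Real.exp (β * x) - Real.exp (-(β * b)) * Real.exp (2 * β * x)) := by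
          rw [e2, e4]
  -- Step 3: FTC for k t = cE(βt) W t
  have hk : ∀ x ∈ Set.Icc b' b,
      HasDerivAt (fun t : ℝ => cE (β * t) * W t)
        (cE (β * x) * (W' x + (β : ℂ) * W x)) x := by
    intro x hx
    have h1 := (cE_deriv β x).mul (hW1 x hx)
    refine h1.congr_deriv ?_
    ring
  have hsub2 : Set.uIcc b' b ⊆ Set.Icc b' b := by rw [Set.uIcc_of_le (le_of_lt hb)]
  have hcont2 : ContinuousOn (fun s : ℝ => cE (β * s) * (W' s + (β : ℂ) * W s)) (Set.uIcc b' b) :=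
    (hcEc β).continuousOn.mul (hgc.mono hsub2)
  have hFTC2 := intervalIntegral.integral_eq_sub_of_hasDerivAt
    (fun t ht => hk t (hsub2 ht)) (hcont2.intervalIntegrable)
  -- Step 4: bound the integral
  have hφint : IntervalIntegrable (fun s => ‖μ‖ * M / β * (Real.exp (β * s) - Real.exp (-(β * b)) * Real.exp (2 * β * s))) MeasureTheory.volume b' b := by
    apply ContinuousOn.intervalIntegrable
    apply ContinuousOn.mul continuousOn_const
    exact ((Real.continuous_exp.comp (continuous_const.mul continuous_id)).continuousOn).sub
      (continuous_const.mul (Real.continuous_exp.comp (continuous_const.mul continuous_id))).continuousOn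
  have hIbound : ‖∫ s in b'..b, cE (β * s) * (W' s + (β : ℂ) * W s)‖ ≤
      ∫ s in b'..b, ‖μ‖ * M / β * (Real.exp (β * s) - Real.exp (-(β * b)) * Real.exp (2 * β * s)) := by
    refine le_trans (intervalIntegral.norm_integral_le_integral_norm (le_of_lt hb)) ?_
    apply intervalIntegral.integral_mono_on (le_of_lt hb)
    · exact hcont2.norm.intervalIntegrable
    · exact hφint
    · exact key2
  -- Step 5: compute integral of bound and estimate
  have hcomp2 : (∫ s in b'..b, ‖μ‖ * M / β * (Real.exp (β * s) - Real.exp (-(β * b)) * Real.exp (2 * β * s)))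
      ≤ ‖μ‖ * M / (2 * β ^ 2) * Real.exp (β * b) := by
    have hd : ∀ s ∈ Set.uIcc b' b, HasDerivAt
        (fun t : ℝ => ‖μ‖ * M / β * (Real.exp (β * t) / β - Real.exp (-(β * b)) * Real.exp (2 * β * t) / (2 * β)))
        (‖μ‖ * M / β * (Real.exp (β * s) - Real.exp (-(β * b)) * Real.exp (2 * β * s))) s := by
      intro s _
      have h1 := ((rexp_deriv β s).div_const β).sub
        ((((rexp_deriv (2*β) s).const_mul (Real.exp (-(β * b)))).div_const (2*β)))
      have h2 := h1.const_mul (‖μ‖ * M / β)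
      refine h2.congr_deriv ?_
      field_simp
    rw [intervalIntegral.integral_eq_sub_of_hasDerivAt hd hφint]
    have e5 : Real.exp (-(β * b)) * Real.exp (2 * β * b) = Real.exp (β * b) := by
      rw [← Real.exp_add]; ring_nf
    have e6 : Real.exp (-(β * b)) * Real.exp (2 * β * b') ≤ Real.exp (β * b') := by
      rw [← Real.exp_add]
      apply Real.exp_le_exp.mpr
      nlinarith [hb, hβ]
    have hc : 0 ≤ ‖μ‖ * M := mul_nonneg (norm_nonneg μ) hM0
    have hexb' : 0 < Real.exp (β * b') := Real.exp_pos _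
    have key : Real.exp (β * b) / β - Real.exp (-(β*b)) * Real.exp (2*β*b) / (2*β)
        - (Real.exp (β * b') / β - Real.exp (-(β*b)) * Real.exp (2*β*b') / (2*β))
        ≤ Real.exp (β * b) / (2 * β) := by
      rw [e5]
      have h2β : (0:ℝ) < 2*β := by linarith
      rw [le_div_iff₀ h2β]
      have hexp : (Real.exp (β*b)/β - Real.exp (β*b)/(2*β)
          - (Real.exp (β*b')/β - Real.exp (-(β*b)) * Real.exp (2*β*b')/(2*β))) * (2*β)
          = Real.exp (β*b) - 2*Real.exp (β*b') + Real.exp (-(β*b)) * Real.exp (2*β*b') := by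
        field_simp
        ring
      rw [hexp]
      linarith [e6, hexb']
    calc ‖μ‖ * M / β * (Real.exp (β * b) / β - Real.exp (-(β*b)) * Real.exp (2*β*b) / (2*β))
        - ‖μ‖ * M / β * (Real.exp (β * b') / β - Real.exp (-(β*b)) * Real.exp (2*β*b') / (2*β))
        = ‖μ‖ * M / β * (Real.exp (β * b) / β - Real.exp (-(β*b)) * Real.exp (2*β*b) / (2*β)
          - (Real.exp (β * b') / β - Real.exp (-(β*b)) * Real.exp (2*β*b') / (2*β))) := by ring
      _ ≤ ‖μ‖ * M / β * (Real.exp (β * b) / (2 * β)) := by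
          apply mul_le_mul_of_nonneg_left key (by positivity)
      _ = ‖μ‖ * M / (2 * β ^ 2) * Real.exp (β * b) := by
          rw [div_mul_div_comm, show β*(2*β) = 2*β^2 from by ring, div_mul_eq_mul_div]
  -- Step 6: conclude
  have hfin : Real.exp (β * b) * ‖W b‖ ≤ Real.exp (β * b') * ‖W b'‖ + ‖μ‖ * M / (2 * β ^ 2) * Real.exp (β * b) := by
    have hkb : cE (β * b) * W b = cE (β * b') * W b' + ∫ s in b'..b, cE (β * s) * (W' s + (β : ℂ) * W s) := by
      rw [hFTC2]; ring
    calc Real.exp (β * b) * ‖W b‖ = ‖cE (β * b) * W b‖ := by rw [norm_mul, norm_cE]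
      _ = ‖cE (β * b') * W b' + ∫ s in b'..b, cE (β * s) * (W' s + (β : ℂ) * W s)‖ := by rw [hkb]
      _ ≤ ‖cE (β * b') * W b'‖ + ‖∫ s in b'..b, cE (β * s) * (W' s + (β : ℂ) * W s)‖ := norm_add_le _ _
      _ ≤ Real.exp (β * b') * ‖W b'‖ + ‖μ‖ * M / (2 * β ^ 2) * Real.exp (β * b) := by
          rw [norm_mul, norm_cE]
          exact add_le_add le_rfl (le_trans hIbound hcomp2)
  have eE : Real.exp (-(b - b') * β) * Real.exp (β * b) = Real.exp (β * b') := by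
    rw [← Real.exp_add]; ring_nf
  have hexb : 0 < Real.exp (β * b) := Real.exp_pos _
  have hgoal : ‖W b‖ ≤ ‖μ‖ * M / (2 * β ^ 2) + Real.exp (-(b - b') * β) * ‖W b'‖ := by
    rw [← mul_le_mul_iff_right₀ hexb]
    calc Real.exp (β * b) * ‖W b‖ ≤ Real.exp (β * b') * ‖W b'‖ + ‖μ‖ * M / (2 * β ^ 2) * Real.exp (β * b) := hfin
      _ = Real.exp (β * b) * (‖μ‖ * M / (2 * β ^ 2) + Real.exp (-(b - b') * β) * ‖W b'‖) := by
          rw [← eE]; ring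
  calc ‖W b‖ ≤ ‖μ‖ * M / (2 * β ^ 2) + Real.exp (-(b - b') * β) * ‖W b'‖ := hgoal
    _ = ‖μ‖ / (2 * β ^ 2) * M + Real.exp (-(b - b') * β) * ‖W b'‖ := by ring
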